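/- Define G₀(z) = max(0, min(1, 2z - 1/2)) and Υ(z) = ∫₀ᶻ G₀(x) dx. Then for all z ∈ [0,1], z·Υ(1-z) + (1-z)·Υ(z) ≤ 1/16, with equality if and only if z ∈ [1/4, 3/4]. -/

import Mathlib

open MeasureTheory Set

/-- The cdf of the uniform distribution on `[1/4, 3/4]`. -/
noncomputable def G₀ (x : ℝ) : ℝ := max 0 (min 1 (2 * x - 1/2))

/-- `Υ(z) = ∫₀ᶻ G₀(x) dx`. -/
noncomputable def Υ (z : ℝ) : ℝ := ∫ x in (0:ℝ)..z, G₀ x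

lemma G₀_cont : Continuous G₀ := by
  unfold G₀
  exact continuous_const.max (continuous_const.min (by continuity))

lemma G₀_intble (a b : ℝ) : IntervalIntegrable G₀ volume a b :=
  G₀_cont.intervalIntegrable a b

lemma G₀_zero {x : ℝ} (h : x ≤ 1/4) : G₀ x = 0 := by
  unfold G₀
  rw [min_eq_right (by linarith), max_eq_left (by linarith)]

lemma G₀_lin {x : ℝ} (h : x ≤ 3/4) : G₀ x = max 0 (2 * x - 1/2) := by
  unfold G₀
  rw [min_eq_right (by linarith)]

lemma G₀_one {x : ℝ} (h : 3/4 ≤ x) : G₀ x = 1 := by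
  unfold G₀
  rw [min_eq_left (by linarith), max_eq_right (by linarith)]

lemma Υ_low {z : ℝ} (h0 : 0 ≤ z) (h : z ≤ 1/4) : Υ z = 0 := by
  unfold Υ
  rw [intervalIntegral.integral_congr (g := fun _ => (0:ℝ)), intervalIntegral.integral_zero]
  intro x hx
  rw [uIcc_of_le h0] at hx
  exact G₀_zero (le_trans hx.2 h)

lemma Υ_mid {z : ℝ} (h1 : 1/4 ≤ z) (h2 : z ≤ 3/4) : Υ z = (z - 1/4)^2 := by
  unfold Υ
  rw [← intervalIntegral.integral_add_adjacent_intervals (b := (1/4:ℝ))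
    (G₀_intble _ _) (G₀_intble _ _)]
  have e1 : (∫ x in (0:ℝ)..(1/4), G₀ x) = 0 := by
    rw [intervalIntegral.integral_congr (g := fun _ => (0:ℝ)), intervalIntegral.integral_zero]
    intro x hx
    rw [uIcc_of_le (by norm_num)] at hx
    exact G₀_zero hx.2
  have e2 : (∫ x in (1/4:ℝ)..z, G₀ x) = (z - 1/4)^2 := by
    rw [intervalIntegral.integral_congr (g := fun x => 2 * x - 1/2)]
    · rw [intervalIntegral.integral_eq_sub_of_hasDerivAt
        (f := fun x => x^2 - x/2) (f' := fun x => 2 * x - 1/2)]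
      · ring
      · intro x _
        have : HasDerivAt (fun x : ℝ => x^2 - x/2) (2 * x - 1/2) x := by
          have h := ((hasDerivAt_pow 2 x).sub ((hasDerivAt_id x).div_const 2))
          exact h.congr_deriv (by ring)
        exact this
      · exact (by continuity : Continuous fun x : ℝ => 2 * x - 1/2).intervalIntegrable _ _
    · intro x hx
      rw [uIcc_of_le h1] at hx
      rw [G₀_lin (le_trans hx.2 h2), max_eq_right (by linarith [hx.1])]
  rw [e1, e2, zero_add]

lemma Υ_hi {z : ℝ} (h : 3/4 ≤ z) : Υ z = z - 1/2 := by
  unfold Υ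
  rw [← intervalIntegral.integral_add_adjacent_intervals (b := (3/4:ℝ))
    (G₀_intble _ _) (G₀_intble _ _)]
  have e1 : (∫ x in (0:ℝ)..(3/4), G₀ x) = 1/4 := by
    have := Υ_mid (z := 3/4) (by norm_num) (by norm_num)
    unfold Υ at this
    rw [this]; norm_num
  have e2 : (∫ x in (3/4:ℝ)..z, G₀ x) = z - 3/4 := by
    rw [intervalIntegral.integral_congr (g := fun _ => (1:ℝ))]
    · simp
    · intro x hx
      rw [uIcc_of_le h] at hx
      exact G₀_one hx.1
  rw [e1, e2]; ring

/-- For all `z ∈ [0,1]`, `z·Υ(1-z) + (1-z)·Υ(z) ≤ 1/16`,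
with equality if and only if `z ∈ [1/4, 3/4]`. -/
theorem stmt_4 : ∀ z ∈ Icc (0:ℝ) 1,
    z * Υ (1 - z) + (1 - z) * Υ z ≤ 1/16 ∧
    (z * Υ (1 - z) + (1 - z) * Υ z = 1/16 ↔ z ∈ Icc (1/4 : ℝ) (3/4)) := by
  intro z hz
  obtain ⟨h0, h1⟩ := hz
  rcases lt_or_ge z (1/4) with hlt | hge
  · -- z < 1/4, 1 - z > 3/4
    rw [Υ_low h0 hlt.le, Υ_hi (by linarith)]
    constructor
    · nlinarith [sq_nonneg (z - 1/4)]
    · constructor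
      · intro he
        exfalso
        nlinarith [mul_pos (by linarith : (0:ℝ) < 1/4 - z) (by linarith : (0:ℝ) < 1/4 - z)]
      · intro hm
        exact absurd hlt (not_lt.mpr hm.1)
  · rcases le_or_gt z (3/4) with hle | hgt
    · -- middle case
      rw [Υ_mid hge hle, Υ_mid (by linarith) (by linarith)]
      have : z * (1 - z - 1/4)^2 + (1 - z) * (z - 1/4)^2 = 1/16 := by ring
      rw [this]
      exact ⟨le_refl _, ⟨fun _ => ⟨hge, hle⟩, fun _ => rfl⟩⟩
    · -- z > 3/4, 1 - z < 1/4
      rw [Υ_hi hgt.le, Υ_low (by linarith) (by linarith)]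
      constructor
      · nlinarith [sq_nonneg (z - 3/4)]
      · constructor
        · intro he
          exfalso
          nlinarith [mul_pos (by linarith : (0:ℝ) < z - 3/4) (by linarith : (0:ℝ) < z - 3/4)]
        · intro hm
          exact absurd hgt (not_lt.mpr hm.2)
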